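/- Let U be a finite set and let (I_i)_{i∈U} be {0,1}-valued random variables on a probability space with π_i = E[I_i] satisfying π_i ≥ π_min > 0 for all i, and π_{ij} = E[I_i I_j] (with π_{ii} = π_i). Define Δ_{ij} = π_{ij} − π_i π_j and suppose max_{i∈U} Σ_{j∈U} |Δ_{ij}| ≤ D for some constant D ≥ 0. Then for any real numbers (a_i)_{i∈U}, E[ ( Σ_{i∈U} (I_i/π_i − 1) a_i )² ] ≤ (D/π_min²) Σ_{i∈U} a_i². -/

import Mathlib

open MeasureTheory ProbabilityTheory Finset

/-- Unconditional Horvitz–Thompson fluctuation second-moment bound under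
controlled second-order inclusion dependence. -/
theorem ht_fluctuation_second_moment_bound {Ω ι : Type*} [MeasurableSpace Ω]
    (P : Measure Ω) [IsProbabilityMeasure P]
    (U : Finset ι)
    (I : ι → Ω → ℝ) (hImeas : ∀ i, Measurable (I i))
    (hI01 : ∀ i ω, I i ω = 0 ∨ I i ω = 1)
    (π : ι → ℝ) (πmin : ℝ) (hπmin : 0 < πmin)
    (hπlo : ∀ i ∈ U, πmin ≤ π i)
    (hEI : ∀ i ∈ U, ∫ ω, I i ω ∂P = π i)
    (ππ : ι → ι → ℝ)
    (hππ : ∀ i ∈ U, ∀ j ∈ U, ∫ ω, I i ω * I j ω ∂P = ππ i j)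
    (D : ℝ) (hD : 0 ≤ D)
    (hrow : ∀ i ∈ U, ∑ j ∈ U, |ππ i j - π i * π j| ≤ D)
    (a : ι → ℝ) :
    ∫ ω, (∑ i ∈ U, (I i ω / π i - 1) * a i) ^ 2 ∂P
      ≤ D / πmin ^ 2 * ∑ i ∈ U, (a i) ^ 2 := by
  have hIbd : ∀ i ω, |I i ω| ≤ 1 := by
    intro i ω; rcases hI01 i ω with h | h <;> simp [h]
  have hint1 : ∀ i, Integrable (I i) P := by
    intro i
    exact (integrable_const (1 : ℝ)).mono' (hImeas i).aestronglyMeasurable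
      (Filter.Eventually.of_forall fun ω => by simpa using hIbd i ω)
  have hint2 : ∀ i j, Integrable (fun ω => I i ω * I j ω) P := by
    intro i j
    refine (integrable_const (1 : ℝ)).mono' ((hImeas i).mul (hImeas j)).aestronglyMeasurable
      (Filter.Eventually.of_forall fun ω => ?_)
    have := mul_le_one₀ (hIbd i ω) (abs_nonneg _) (hIbd j ω)
    simpa [abs_mul] using this
  have hπne : ∀ i ∈ U, π i ≠ 0 := fun i hi => ne_of_gt (lt_of_lt_of_le hπmin (hπlo i hi))
  -- integrability of products of fluctuations
  have hgint : ∀ i j, Integrable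
      (fun ω => ((I i ω / π i - 1) * a i) * ((I j ω / π j - 1) * a j)) P := by
    intro i j
    have h : (fun ω => ((I i ω / π i - 1) * a i) * ((I j ω / π j - 1) * a j))
        = fun ω => (a i * a j * ((π i)⁻¹ * (π j)⁻¹)) * (I i ω * I j ω)
          - (a i * a j * (π i)⁻¹) * I i ω - (a i * a j * (π j)⁻¹) * I j ω + a i * a j := by
      funext ω; field_simp; ring
    rw [h]
    exact ((((hint2 i j).const_mul _).sub ((hint1 i).const_mul _)).sub
      ((hint1 j).const_mul _)).add (integrable_const _)
  -- compute each cross integral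
  have hcross : ∀ i ∈ U, ∀ j ∈ U,
      ∫ ω, ((I i ω / π i - 1) * a i) * ((I j ω / π j - 1) * a j) ∂P
        = a i * a j * ((ππ i j - π i * π j) / (π i * π j)) := by
    intro i hi j hj
    have h : (fun ω => ((I i ω / π i - 1) * a i) * ((I j ω / π j - 1) * a j))
        = fun ω => (a i * a j * ((π i)⁻¹ * (π j)⁻¹)) * (I i ω * I j ω)
          - (a i * a j * (π i)⁻¹) * I i ω - (a i * a j * (π j)⁻¹) * I j ω + a i * a j := by
      funext ω; field_simp; ring
    have hA : Integrable (fun ω => (a i * a j * ((π i)⁻¹ * (π j)⁻¹)) * (I i ω * I j ω)) P :=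
      (hint2 i j).const_mul _
    have hB : Integrable (fun ω => (a i * a j * (π i)⁻¹) * I i ω) P := (hint1 i).const_mul _
    have hC : Integrable (fun ω => (a i * a j * (π j)⁻¹) * I j ω) P := (hint1 j).const_mul _
    have hAB : Integrable (fun ω => (a i * a j * ((π i)⁻¹ * (π j)⁻¹)) * (I i ω * I j ω)
        - (a i * a j * (π i)⁻¹) * I i ω) P := hA.sub hB
    have hABC : Integrable (fun ω => (a i * a j * ((π i)⁻¹ * (π j)⁻¹)) * (I i ω * I j ω)
        - (a i * a j * (π i)⁻¹) * I i ω - (a i * a j * (π j)⁻¹) * I j ω) P := hAB.sub hC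
    rw [h, integral_add hABC (integrable_const _),
      integral_sub hAB hC, integral_sub hA hB,
      integral_const_mul, integral_const_mul, integral_const_mul, integral_const,
      hEI i hi, hEI j hj, hππ i hi j hj]
    have h1 : π i ≠ 0 := hπne i hi
    have h2 : π j ≠ 0 := hπne j hj
    simp only [probReal_univ, measure_univ, ENNReal.toReal_one, smul_eq_mul, one_mul]
    field_simp
    ring
  -- expand the square of the sum
  have hexp : ∫ ω, (∑ i ∈ U, (I i ω / π i - 1) * a i) ^ 2 ∂P
      = ∑ i ∈ U, ∑ j ∈ U, a i * a j * ((ππ i j - π i * π j) / (π i * π j)) := by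
    have h : (fun ω => (∑ i ∈ U, (I i ω / π i - 1) * a i) ^ 2)
        = fun ω => ∑ i ∈ U, ∑ j ∈ U,
            ((I i ω / π i - 1) * a i) * ((I j ω / π j - 1) * a j) := by
      funext ω
      rw [sq, Finset.sum_mul_sum]
    rw [h, integral_finset_sum U (fun i _ => integrable_finset_sum U fun j _ => hgint i j)]
    refine Finset.sum_congr rfl fun i hi => ?_
    rw [integral_finset_sum U fun j _ => hgint i j]
    exact Finset.sum_congr rfl fun j hj => hcross i hi j hj
  rw [hexp]
  -- symmetry of ππ on U
  have hsym : ∀ i ∈ U, ∀ j ∈ U, ππ i j = ππ j i := by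
    intro i hi j hj
    rw [← hππ i hi j hj, ← hππ j hj i hi]
    exact integral_congr_ae (Filter.Eventually.of_forall fun ω => mul_comm _ _)
  have hπminsq : (0:ℝ) < πmin ^ 2 := by positivity
  -- termwise bound
  have hterm : ∀ i ∈ U, ∀ j ∈ U,
      a i * a j * ((ππ i j - π i * π j) / (π i * π j))
        ≤ (a i ^ 2 + a j ^ 2) / 2 * (|ππ i j - π i * π j| / πmin ^ 2) := by
    intro i hi j hj
    have hij : πmin ^ 2 ≤ π i * π j := by
      have := mul_le_mul (hπlo i hi) (hπlo j hj) (le_of_lt hπmin)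
        (le_trans (le_of_lt hπmin) (hπlo i hi))
      calc πmin ^ 2 = πmin * πmin := sq πmin ▸ rfl
        _ ≤ π i * π j := this
    have hijpos : (0:ℝ) < π i * π j := lt_of_lt_of_le hπminsq hij
    calc a i * a j * ((ππ i j - π i * π j) / (π i * π j))
        ≤ |a i * a j * ((ππ i j - π i * π j) / (π i * π j))| := le_abs_self _
      _ = |a i| * |a j| * (|ππ i j - π i * π j| / (π i * π j)) := by
          rw [abs_mul, abs_mul, abs_div, abs_of_pos hijpos]
      _ ≤ |a i| * |a j| * (|ππ i j - π i * π j| / πmin ^ 2) := by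
          refine mul_le_mul_of_nonneg_left ?_ (by positivity)
          exact div_le_div_of_nonneg_left (abs_nonneg _) hπminsq hij
      _ ≤ (a i ^ 2 + a j ^ 2) / 2 * (|ππ i j - π i * π j| / πmin ^ 2) := by
          refine mul_le_mul_of_nonneg_right ?_ (by positivity)
          nlinarith [sq_nonneg (|a i| - |a j|), sq_abs (a i), sq_abs (a j)]
  calc ∑ i ∈ U, ∑ j ∈ U, a i * a j * ((ππ i j - π i * π j) / (π i * π j))
      ≤ ∑ i ∈ U, ∑ j ∈ U, (a i ^ 2 + a j ^ 2) / 2 * (|ππ i j - π i * π j| / πmin ^ 2) :=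
        Finset.sum_le_sum fun i hi => Finset.sum_le_sum fun j hj => hterm i hi j hj
    _ = (1 / (2 * πmin ^ 2)) * ((∑ i ∈ U, ∑ j ∈ U, a i ^ 2 * |ππ i j - π i * π j|)
          + ∑ i ∈ U, ∑ j ∈ U, a j ^ 2 * |ππ i j - π i * π j|) := by
        rw [← Finset.sum_add_distrib, Finset.mul_sum]
        refine Finset.sum_congr rfl fun i _ => ?_
        rw [← Finset.sum_add_distrib, Finset.mul_sum]
        refine Finset.sum_congr rfl fun j _ => ?_
        field_simp
    _ ≤ (1 / (2 * πmin ^ 2)) * ((D * ∑ i ∈ U, a i ^ 2) + D * ∑ i ∈ U, a i ^ 2) := by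
        refine mul_le_mul_of_nonneg_left ?_ (by positivity)
        refine add_le_add ?_ ?_
        · calc ∑ i ∈ U, ∑ j ∈ U, a i ^ 2 * |ππ i j - π i * π j|
              = ∑ i ∈ U, a i ^ 2 * ∑ j ∈ U, |ππ i j - π i * π j| := by
                refine Finset.sum_congr rfl fun i _ => ?_; rw [Finset.mul_sum]
            _ ≤ ∑ i ∈ U, a i ^ 2 * D :=
                Finset.sum_le_sum fun i hi =>
                  mul_le_mul_of_nonneg_left (hrow i hi) (sq_nonneg _)
            _ = D * ∑ i ∈ U, a i ^ 2 := by rw [← Finset.sum_mul]; ring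
        · calc ∑ i ∈ U, ∑ j ∈ U, a j ^ 2 * |ππ i j - π i * π j|
              = ∑ j ∈ U, ∑ i ∈ U, a j ^ 2 * |ππ i j - π i * π j| := Finset.sum_comm
            _ = ∑ j ∈ U, a j ^ 2 * ∑ i ∈ U, |ππ j i - π j * π i| := by
                refine Finset.sum_congr rfl fun j hj => ?_
                rw [Finset.mul_sum]
                refine Finset.sum_congr rfl fun i hi => ?_
                rw [hsym i hi j hj, mul_comm (π i) (π j)]
            _ ≤ ∑ j ∈ U, a j ^ 2 * D :=
                Finset.sum_le_sum fun j hj =>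
                  mul_le_mul_of_nonneg_left (hrow j hj) (sq_nonneg _)
            _ = D * ∑ i ∈ U, a i ^ 2 := by rw [← Finset.sum_mul]; ring
    _ = D / πmin ^ 2 * ∑ i ∈ U, (a i) ^ 2 := by field_simp; ring
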